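/- Fix α ∈ (0,1). Under the simultaneous Doeblin condition there exists a constant B₀ > 0 such that for every x ∈ S and every policy π ∈ 𝒫, E_x^π[ exp( λα Σ_{t=0}^{T−1} (C(X_t,A_t) − J*(λ,X_t)) ) ] ≥ B₀, where T is the first positive arrival time to z. -/

import Mathlib

open scoped Classical BigOperators ENNReal

namespace RiskSensitive

/-- A (history-dependent, randomized) policy for a finite MDP: given the past
(chronological list of (state, action) pairs) and the current state, it assigns a
probability weight to each action, concentrated on the admissible actions. -/
structure Policy (S A : Type*) [Fintype S] [Fintype A] (Adm : S → Finset A) where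
  toFun : List (S × A) → S → A → ℝ
  nonneg : ∀ h s a, 0 ≤ toFun h s a
  sum_one : ∀ h s, ∑ a, toFun h s a = 1
  supp : ∀ h s a, a ∉ Adm s → toFun h s a = 0

variable {S A : Type*} [Fintype S] [Fintype A]
variable (Adm : S → Finset A) (p : S → A → S → ℝ) (C : S → A → ℝ) (lam : ℝ)

/-- Probability of a finite trajectory (list of (action, next-state) pairs), given the
history so far and the current state. -/
noncomputable def pathProbAux (π : Policy S A Adm) :
    List (S × A) → S → List (A × S) → ℝ
  | _, _, [] => 1
  | hist, x, (a, y) :: rest =>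
      π.toFun hist x a * p x a y * pathProbAux π (hist ++ [(x, a)]) y rest

/-- `pathProb π x l` is `P_x^π[A_0 = a_0, X_1 = y_1, …]` for `l = [(a_0,y_1),…]`. -/
noncomputable def pathProb (π : Policy S A Adm) (x : S) (l : List (A × S)) : ℝ :=
  pathProbAux Adm p π [] x l

/-- Probability of a cylinder event depending on the first `n` (action, next-state) pairs. -/
noncomputable def cylProb (π : Policy S A Adm) (x : S) (n : ℕ)
    (E : (Fin n → A × S) → Prop) : ℝ :=
  ∑ v : Fin n → A × S, if E v then pathProb Adm p π x (List.ofFn v) else 0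

/-- The state `X_t` along the trajectory encoded by `l`, starting from `x`. -/
def stateAt (x : S) (l : List (A × S)) (t : ℕ) : S :=
  (l.take t).foldl (fun _ q => q.2) x

/-- The final state of the finite trajectory `l` started at `x`. -/
def lastState (x : S) (l : List (A × S)) : S :=
  l.foldl (fun _ q => q.2) x

/-- `Σ_t w(X_t, A_t)` along the finite trajectory `l` started at `x`. -/
def costSum (w : S → A → ℝ) : S → List (A × S) → ℝ
  | _, [] => 0
  | x, (a, y) :: rest => w x a + costSum w y rest

/-- `J_n(λ,π,x) = (1/λ) log E_x^π[exp(λ Σ_{t<n} C(X_t,A_t))]`. -/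
noncomputable def Jn (π : Policy S A Adm) (x : S) (n : ℕ) : ℝ :=
  (1 / lam) * Real.log (∑ v : Fin n → A × S,
    pathProb Adm p π x (List.ofFn v) * Real.exp (lam * costSum C x (List.ofFn v)))

/-- The risk-sensitive average cost `J(λ,π,x) = limsup_n J_n(λ,π,x)/n`. -/
noncomputable def Javg (π : Policy S A Adm) (x : S) : ℝ :=
  Filter.limsup (fun n : ℕ => Jn Adm p C lam π x n / n) Filter.atTop

/-- Optimal risk-sensitive average cost `J*(λ,x)`. -/
noncomputable def Jopt (x : S) : ℝ :=
  ⨅ π : Policy S A Adm, Javg Adm p C lam π x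

/-- `π` is `ε`-optimal at `x`. -/
def EpsOptimalAt (π : Policy S A Adm) (x : S) (ε : ℝ) : Prop :=
  Javg Adm p C lam π x ≤ Jopt Adm p C lam x + ε

/-- `FirstExit Q v` : the trajectory `v` leaves `{Q}` for the first time exactly at its
last step, i.e. the exit time of `Q` equals `n`. -/
def FirstExit (Q : S → Prop) {n : ℕ} (v : Fin n → A × S) : Prop :=
  0 < n ∧ (∀ t : Fin n, (t : ℕ) + 1 < n → Q (v t).2) ∧
    ∀ t : Fin n, (t : ℕ) + 1 = n → ¬ Q (v t).2

/-- `E_x^π[ exp(Σ_{t<τ} w(X_t,A_t)) ]` where `τ = min{n ≥ 1 : ¬ Q (X_n)}` is the first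
exit time from `Q` (the contribution of `[τ = ∞]` is null when `τ < ∞` a.s.). -/
noncomputable def EexitExp (π : Policy S A Adm) (x : S) (Q : S → Prop)
    (w : S → A → ℝ) : ℝ≥0∞ :=
  ∑' n : ℕ, ∑ v : Fin n → A × S,
    if FirstExit Q v then
      ENNReal.ofReal (pathProb Adm p π x (List.ofFn v) *
        Real.exp (costSum w x (List.ofFn v)))
    else 0

/-- `E_x^π[ exp(Σ_{t<T} w(X_t,A_t)) ]` with `T` the first positive arrival time to `z`. -/
noncomputable def EhitExp (π : Policy S A Adm) (x z : S) (w : S → A → ℝ) : ℝ≥0∞ :=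
  EexitExp Adm p π x (fun y => y ≠ z) w

/-- `E_x^π[T]`, the expected first positive arrival time to `z`, computed as
`Σ_{n≥0} P_x^π[T > n]`. -/
noncomputable def ExpT (π : Policy S A Adm) (x z : S) : ℝ≥0∞ :=
  ∑' n : ℕ, ENNReal.ofReal
    (cylProb Adm p π x n (fun v => ∀ t : Fin n, (v t).2 ≠ z))

/-- `P_x^π[T > n]`, the probability that `z` is not visited during the first `n` steps. -/
noncomputable def survProb (π : Policy S A Adm) (x z : S) (n : ℕ) : ℝ :=
  cylProb Adm p π x n (fun v => ∀ t : Fin n, (v t).2 ≠ z)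

/-- The stationary policy induced by a choice function `f ∈ 𝔽`. -/
noncomputable def stationary (f : S → A) (hf : ∀ s, f s ∈ Adm s) : Policy S A Adm where
  toFun := fun _ s a => if a = f s then 1 else 0
  nonneg := by intro h s a; (try dsimp only); split <;> norm_num
  sum_one := by intro h s; simp
  supp := by
    intro h s a ha
    try dsimp only
    rw [if_neg]
    intro hEq
    exact ha (hEq ▸ hf s)

/-- The simultaneous Doeblin condition: `E_x^f[T] ≤ M` for every state `x` and every
stationary policy `f`, where `T` is the first positive arrival time to `z`. -/
def Doeblin (z : S) (M : ℝ) : Prop :=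
  0 < M ∧ ∀ (x : S) (f : S → A) (hf : ∀ s, f s ∈ Adm s),
    ExpT Adm p (stationary Adm f hf) x z ≤ ENNReal.ofReal M

/-- `B_g(x) = {a ∈ A(x) : g(x) = max{g(y) : p_{xy}(a) > 0}}`. -/
def Bg (g : S → ℝ) (x : S) : Set A :=
  {a | a ∈ Adm x ∧ g x = sSup (g '' {y | 0 < p x a y})}

/-- The family `𝒢` of functions characterizing `J*(λ,·)`. -/
def Gclass : Set (S → ℝ) :=
  {g | (∀ x, g x = sInf ((fun a => sSup (g '' {y | 0 < p x a y})) '' (Adm x : Set A))) ∧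
    ∃ h : S → ℝ, ∀ x,
      sInf ((fun a => Real.exp (lam * C x a) * ∑ y, p x a y * Real.exp (lam * h y)) ''
        Bg Adm p g x) ≤ Real.exp (lam * g x + lam * h x)}

/-- The class `𝒫*` of policies which always select actions in `B*(X_t)`. -/
def Pstar : Set (Policy S A Adm) :=
  {π | ∀ (x : S) (t : ℕ),
    cylProb Adm p π x (t + 1)
      (fun v => (v (Fin.last t)).1 ∈
        Bg Adm p (Jopt Adm p C lam) (stateAt x (List.ofFn v) t)) = 1}

/-- The deviation function
`h(x) = inf_{π ∈ 𝒫*} (1/λ) log E_x^π[exp(λα Σ_{t<T}(C(X_t,A_t) − J*(λ,X_t)))]`. -/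
noncomputable def hdev (z : S) (α : ℝ) (x : S) : EReal :=
  ⨅ π ∈ Pstar Adm p C lam, ((lam⁻¹ : ℝ) : EReal) *
    ENNReal.log (EhitExp Adm p π x z
      (fun s a => lam * α * (C s a - Jopt Adm p C lam s)))

/-- `ψ(ε) = (1/λ) inf_{δ∈𝒫*} log E_z^δ[exp(λ Σ_{t<T}(C(X_t,A_t) − γ₀ − 2ε))]`. -/
noncomputable def psi (z : S) (ε : ℝ) : EReal :=
  ((lam⁻¹ : ℝ) : EReal) * ⨅ π ∈ Pstar Adm p C lam,
    ENNReal.log (EhitExp Adm p π z z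
      (fun s a => lam * (C s a - Jopt Adm p C lam z - 2 * ε)))

/-- `ξ₀ = −(1−α) log β / (λα)`. -/
noncomputable def xi0 (α β : ℝ) : ℝ := -((1 - α) * Real.log β) / (lam * α)

/-- `ξ₁`: 1 if `J*(λ,·)` is constant, otherwise the minimum gap between distinct
values of `J*(λ,·)`. -/
noncomputable def xi1 : ℝ :=
  if ∀ u v : S, Jopt Adm p C lam u = Jopt Adm p C lam v then 1
  else sInf {d | ∃ u v : S, Jopt Adm p C lam u < Jopt Adm p C lam v ∧
    d = Jopt Adm p C lam v - Jopt Adm p C lam u}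

/-- `ξ = min{ξ₀, ξ₁}`. -/
noncomputable def xi (α β : ℝ) : ℝ := min (xi0 lam α β) (xi1 Adm p C lam)

/-- The shifted policy obtained by prefixing the fixed history `pre`. -/
def shiftPolicy (π : Policy S A Adm) (pre : List (S × A)) : Policy S A Adm where
  toFun := fun h s a => π.toFun (pre ++ h) s a
  nonneg := fun h s a => π.nonneg _ s a
  sum_one := fun h s => π.sum_one _ s
  supp := fun h s a ha => π.supp _ s a ha

/-- The history (list of (state, action) pairs) along the trajectory `l` started at `x`. -/
def histOf : S → List (A × S) → List (S × A)
  | _, [] => []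
  | x, (a, y) :: rest => (x, a) :: histOf y rest


/-! ### Auxiliary lemmas for the proof of `uniform_lower_bound` -/

section Aux

variable {Adm : S → Finset A} {p : S → A → S → ℝ}

lemma pathProbAux_shift (π : Policy S A Adm) :
    ∀ (l : List (A × S)) (h₁ h₂ : List (S × A)) (x : S),
      pathProbAux Adm p π (h₁ ++ h₂) x l =
        pathProbAux Adm p (shiftPolicy Adm π h₁) h₂ x l
  | [], _, _, _ => rfl
  | (a, y) :: rest, h₁, h₂, x => by
      simp only [pathProbAux]
      rw [List.append_assoc, pathProbAux_shift π rest h₁ (h₂ ++ [(x, a)]) y]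
      rfl

lemma pathProbAux_eq_shift (π : Policy S A Adm) (h : List (S × A)) (x : S)
    (l : List (A × S)) :
    pathProbAux Adm p π h x l = pathProb Adm p (shiftPolicy Adm π h) x l := by
  rw [pathProb, ← pathProbAux_shift, List.append_nil]

lemma pathProb_cons (π : Policy S A Adm) (x : S) (a : A) (y : S) (l : List (A × S)) :
    pathProb Adm p π x ((a, y) :: l) =
      π.toFun [] x a * p x a y *
        pathProb Adm p (shiftPolicy Adm π [(x, a)]) y l := by
  rw [pathProb, pathProbAux, ← pathProbAux_eq_shift]
  rfl

lemma pathProb_congr {π π' : Policy S A Adm} (hπ : π.toFun = π'.toFun) :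
    ∀ (l : List (A × S)) (h : List (S × A)) (x : S),
      pathProbAux Adm p π h x l = pathProbAux Adm p π' h x l
  | [], _, _ => rfl
  | (a, y) :: rest, h, x => by
      simp only [pathProbAux, hπ]
      rw [pathProb_congr hπ rest (h ++ [(x, a)]) y]

lemma pathProbAux_nonneg
    (hp : ∀ (x : S), ∀ a ∈ Adm x, (∀ y, 0 ≤ p x a y) ∧ (∑ y, p x a y) = 1)
    (π : Policy S A Adm) :
    ∀ (l : List (A × S)) (h : List (S × A)) (x : S),
      0 ≤ pathProbAux Adm p π h x l
  | [], _, _ => zero_le_one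
  | (a, y) :: rest, h, x => by
      by_cases ha : a ∈ Adm x
      · exact mul_nonneg (mul_nonneg (π.nonneg h x a) ((hp x a ha).1 y))
          (pathProbAux_nonneg hp π rest (h ++ [(x, a)]) y)
      · simp [pathProbAux, π.supp h x a ha]

lemma pathProb_nonneg
    (hp : ∀ (x : S), ∀ a ∈ Adm x, (∀ y, 0 ≤ p x a y) ∧ (∑ y, p x a y) = 1)
    (π : Policy S A Adm) (x : S) (l : List (A × S)) :
    0 ≤ pathProb Adm p π x l :=
  pathProbAux_nonneg hp π l [] x

lemma cylProb_succ (π : Policy S A Adm) (x : S) (n : ℕ)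
    (E : (Fin (n + 1) → A × S) → Prop) :
    cylProb Adm p π x (n + 1) E =
      ∑ q : A × S, π.toFun [] x q.1 * p x q.1 q.2 *
        cylProb Adm p (shiftPolicy Adm π [(x, q.1)]) q.2 n
          (fun w => E (Fin.cons q w)) := by
  rw [cylProb, ← Equiv.sum_comp (Fin.consEquiv fun _ => A × S), Fintype.sum_prod_type]
  refine Finset.sum_congr rfl fun q _ => ?_
  obtain ⟨a, y⟩ := q
  rw [cylProb, Finset.mul_sum]
  refine Finset.sum_congr rfl fun w _ => ?_
  have h1 : (Fin.consEquiv fun _ => A × S) ((a, y), w) = Fin.cons (a, y) w := rfl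
  have h2 : List.ofFn (Fin.cons (a, y) w) = (a, y) :: List.ofFn w := by
    rw [List.ofFn_succ]
    simp
  rw [h1, h2, pathProb_cons, mul_ite, mul_zero]

lemma sum_onestep
    (hp : ∀ (x : S), ∀ a ∈ Adm x, (∀ y, 0 ≤ p x a y) ∧ (∑ y, p x a y) = 1)
    (π : Policy S A Adm) (x : S) :
    ∑ q : A × S, π.toFun [] x q.1 * p x q.1 q.2 = 1 := by
  rw [Fintype.sum_prod_type]
  have : ∀ a : A, ∑ y : S, π.toFun [] x a * p x a y = π.toFun [] x a := by
    intro a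
    by_cases ha : a ∈ Adm x
    · rw [← Finset.mul_sum, (hp x a ha).2, mul_one]
    · simp [π.supp [] x a ha]
  simp_rw [this]
  exact π.sum_one [] x

lemma sum_pathProb
    (hp : ∀ (x : S), ∀ a ∈ Adm x, (∀ y, 0 ≤ p x a y) ∧ (∑ y, p x a y) = 1) :
    ∀ (n : ℕ) (π : Policy S A Adm) (x : S),
      cylProb Adm p π x n (fun _ => True) = 1
  | 0, π, x => by simp [cylProb, pathProb, pathProbAux]
  | n + 1, π, x => by
      rw [cylProb_succ]
      have : ∀ q : A × S, π.toFun [] x q.1 * p x q.1 q.2 *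
          cylProb Adm p (shiftPolicy Adm π [(x, q.1)]) q.2 n (fun _ => True) =
          π.toFun [] x q.1 * p x q.1 q.2 := by
        intro q
        rw [sum_pathProb hp n, mul_one]
      simp_rw [this]
      exact sum_onestep hp π x

lemma cylProb_congr {π : Policy S A Adm} {x : S} {n : ℕ}
    {E E' : (Fin n → A × S) → Prop} (h : ∀ v, E v ↔ E' v) :
    cylProb Adm p π x n E = cylProb Adm p π x n E' :=
  Finset.sum_congr rfl fun v _ => if_congr (h v) rfl rfl

lemma cylProb_and_const {π : Policy S A Adm} {x : S} {n : ℕ}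
    (P : Prop) (E : (Fin n → A × S) → Prop) :
    cylProb Adm p π x n (fun w => P ∧ E w) = if P then cylProb Adm p π x n E else 0 := by
  by_cases hP : P <;> simp [cylProb, hP]

lemma cylProb_zero {π : Policy S A Adm} {x : S} (E : (Fin 0 → A × S) → Prop) :
    cylProb Adm p π x 0 E = if E (fun t => t.elim0) then 1 else 0 := by
  rw [cylProb, Fintype.sum_subsingleton _ (fun t : Fin 0 => t.elim0)]
  simp [pathProb, pathProbAux]

lemma surv_zero (π : Policy S A Adm) (x z : S) : survProb Adm p π x z 0 = 1 := by
  rw [survProb, cylProb_zero]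
  simp

lemma surv_succ (π : Policy S A Adm) (x z : S) (n : ℕ) :
    survProb Adm p π x z (n + 1) = ∑ q : A × S, π.toFun [] x q.1 * p x q.1 q.2 *
      (if q.2 ≠ z then survProb Adm p (shiftPolicy Adm π [(x, q.1)]) q.2 z n else 0) := by
  rw [survProb, cylProb_succ]
  refine Finset.sum_congr rfl fun q _ => ?_
  congr 1
  rw [cylProb_congr (E' := fun w => q.2 ≠ z ∧ ∀ t : Fin n, (w t).2 ≠ z)
    (fun w => by rw [Fin.forall_fin_succ]; simp), cylProb_and_const]
  split_ifs <;> rfl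

/-- The probability that `T = m` exactly (sum over first-exit trajectories). -/
noncomputable def FEsum (Adm : S → Finset A) (p : S → A → S → ℝ) (π : Policy S A Adm)
    (x z : S) (m : ℕ) : ℝ :=
  cylProb Adm p π x m (fun v => FirstExit (fun y => y ≠ z) v)

lemma FEsum_zero (π : Policy S A Adm) (x z : S) : FEsum Adm p π x z 0 = 0 := by
  rw [FEsum, cylProb_zero]
  simp [FirstExit]

lemma firstExit_cons {z : S} {n : ℕ} (hn : 0 < n) (q : A × S) (w : Fin n → A × S) :
    FirstExit (fun y => y ≠ z) (Fin.cons q w) ↔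
      q.2 ≠ z ∧ FirstExit (fun y => y ≠ z) w := by
  unfold FirstExit
  rw [Fin.forall_fin_succ, Fin.forall_fin_succ]
  simp only [Fin.cons_zero, Fin.cons_succ, Fin.val_zero, Fin.val_succ]
  constructor
  · rintro ⟨-, ⟨h1, h2⟩, ⟨-, h4⟩⟩
    exact ⟨h1 (by omega), hn, fun s hs => h2 s (by omega), fun s hs => h4 s (by omega)⟩
  · rintro ⟨hq, -, h2, h4⟩
    exact ⟨Nat.succ_pos n, ⟨fun _ => hq, fun s hs => h2 s (by omega)⟩,
      ⟨fun h => absurd h (by omega), fun s hs => h4 s (by omega)⟩⟩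

lemma FEsum_one (π : Policy S A Adm) (x z : S) :
    FEsum Adm p π x z 1 = ∑ q : A × S, π.toFun [] x q.1 * p x q.1 q.2 *
      (if q.2 = z then 1 else 0) := by
  rw [FEsum, cylProb_succ]
  refine Finset.sum_congr rfl fun q _ => ?_
  congr 1
  rw [cylProb_zero]
  congr 1
  simp only [eq_iff_iff]
  unfold FirstExit
  rw [Fin.forall_fin_one, Fin.forall_fin_one]
  simp only [Fin.cons_zero, Fin.val_zero]
  norm_num

lemma FEsum_succ_succ (π : Policy S A Adm) (x z : S) (n : ℕ) :
    FEsum Adm p π x z (n + 2) = ∑ q : A × S, π.toFun [] x q.1 * p x q.1 q.2 *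
      (if q.2 ≠ z then FEsum Adm p (shiftPolicy Adm π [(x, q.1)]) q.2 z (n + 1) else 0) := by
  rw [FEsum, cylProb_succ]
  refine Finset.sum_congr rfl fun q _ => ?_
  congr 1
  rw [cylProb_congr (E' := fun w => q.2 ≠ z ∧ FirstExit (fun y => y ≠ z) w)
    (fun w => firstExit_cons (Nat.succ_pos n) q w), cylProb_and_const]
  split_ifs <;> rfl

lemma surv_step
    (hp : ∀ (x : S), ∀ a ∈ Adm x, (∀ y, 0 ≤ p x a y) ∧ (∑ y, p x a y) = 1) (z : S) :
    ∀ (n : ℕ) (π : Policy S A Adm) (x : S),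
      survProb Adm p π x z n = survProb Adm p π x z (n + 1) + FEsum Adm p π x z (n + 1)
  | 0, π, x => by
      rw [surv_zero, surv_succ, FEsum_one, ← Finset.sum_add_distrib]
      refine (sum_onestep hp π x).symm.trans (Finset.sum_congr rfl fun q _ => ?_)
      rw [surv_zero]
      by_cases hq : q.2 = z <;> simp [hq]
  | n + 1, π, x => by
      rw [surv_succ _ _ _ n, surv_succ _ _ _ (n + 1), FEsum_succ_succ,
        ← Finset.sum_add_distrib]
      refine Finset.sum_congr rfl fun q _ => ?_
      rw [surv_step hp z n (shiftPolicy Adm π [(x, q.1)]) q.2]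
      by_cases hq : q.2 = z <;> simp [hq] <;> ring

lemma one_sub_surv
    (hp : ∀ (x : S), ∀ a ∈ Adm x, (∀ y, 0 ≤ p x a y) ∧ (∑ y, p x a y) = 1) (z : S)
    (π : Policy S A Adm) (x : S) :
    ∀ N : ℕ, 1 - survProb Adm p π x z N = ∑ m ∈ Finset.range (N + 1), FEsum Adm p π x z m
  | 0 => by simp [surv_zero, FEsum_zero]
  | N + 1 => by
      rw [Finset.sum_range_succ, ← one_sub_surv hp z π x N]
      have := surv_step hp z N π x
      linarith

lemma cylProb_nonneg
    (hp : ∀ (x : S), ∀ a ∈ Adm x, (∀ y, 0 ≤ p x a y) ∧ (∑ y, p x a y) = 1)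
    (π : Policy S A Adm) (x : S) (n : ℕ) (E : (Fin n → A × S) → Prop) :
    0 ≤ cylProb Adm p π x n E :=
  Finset.sum_nonneg fun v _ => by
    split_ifs
    · exact pathProb_nonneg hp π x _
    · rfl

lemma onestep_nonneg
    (hp : ∀ (x : S), ∀ a ∈ Adm x, (∀ y, 0 ≤ p x a y) ∧ (∑ y, p x a y) = 1)
    (π : Policy S A Adm) (x : S) (q : A × S) :
    0 ≤ π.toFun [] x q.1 * p x q.1 q.2 := by
  by_cases ha : q.1 ∈ Adm x
  · exact mul_nonneg (π.nonneg [] x q.1) ((hp x q.1 ha).1 q.2)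
  · simp [π.supp [] x q.1 ha]

lemma surv_antitone
    (hp : ∀ (x : S), ∀ a ∈ Adm x, (∀ y, 0 ≤ p x a y) ∧ (∑ y, p x a y) = 1) (z : S) :
    ∀ (n : ℕ) (π : Policy S A Adm) (x : S),
      survProb Adm p π x z (n + 1) ≤ survProb Adm p π x z n
  | 0, π, x => by
      rw [surv_zero, surv_succ, ← sum_onestep hp π x]
      refine Finset.sum_le_sum fun q _ => ?_
      have h0 := onestep_nonneg hp π x q
      split_ifs with hq
      · rw [surv_zero, mul_one]
      · simpa using h0
  | n + 1, π, x => by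
      rw [surv_succ _ _ _ n, surv_succ _ _ _ (n + 1)]
      refine Finset.sum_le_sum fun q _ => ?_
      refine mul_le_mul_of_nonneg_left ?_ (onestep_nonneg hp π x q)
      split_ifs with hq
      · exact surv_antitone hp z n _ q.2
      · rfl

/-- The value iteration for the maximal survival probability. -/
noncomputable def vDP (Adm : S → Finset A) (p : S → A → S → ℝ)
    (hA : ∀ x, (Adm x).Nonempty) (z : S) : ℕ → S → ℝ
  | 0, _ => 1
  | N + 1, x => (Adm x).sup' (hA x)
      fun a => ∑ y, (if y = z then 0 else p x a y * vDP Adm p hA z N y)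

lemma vDP_nonneg
    (hp : ∀ (x : S), ∀ a ∈ Adm x, (∀ y, 0 ≤ p x a y) ∧ (∑ y, p x a y) = 1)
    (hA : ∀ x, (Adm x).Nonempty) (z : S) :
    ∀ (N : ℕ) (x : S), 0 ≤ vDP Adm p hA z N x
  | 0, x => zero_le_one
  | N + 1, x => by
      obtain ⟨a, ha⟩ := hA x
      refine le_trans ?_ (Finset.le_sup' _ ha)
      refine Finset.sum_nonneg fun y _ => ?_
      split_ifs
      · rfl
      · exact mul_nonneg ((hp x a ha).1 y) (vDP_nonneg hp hA z N y)

lemma vDP_succ_le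
    (hp : ∀ (x : S), ∀ a ∈ Adm x, (∀ y, 0 ≤ p x a y) ∧ (∑ y, p x a y) = 1)
    (hA : ∀ x, (Adm x).Nonempty) (z : S) :
    ∀ (N : ℕ) (x : S), vDP Adm p hA z (N + 1) x ≤ vDP Adm p hA z N x
  | 0, x => by
      show Finset.sup' _ _ _ ≤ 1
      refine Finset.sup'_le _ _ fun a ha => ?_
      calc ∑ y, (if y = z then 0 else p x a y * vDP Adm p hA z 0 y)
          ≤ ∑ y, p x a y := Finset.sum_le_sum fun y _ => by
            split_ifs
            · exact (hp x a ha).1 y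
            · show p x a y * vDP Adm p hA z 0 y ≤ p x a y
              rw [show vDP Adm p hA z 0 y = 1 from rfl, mul_one]
        _ = 1 := (hp x a ha).2
  | N + 1, x => by
      show Finset.sup' _ _ _ ≤ Finset.sup' _ _ _
      refine Finset.sup'_le _ _ fun a ha => ?_
      refine le_trans ?_ (Finset.le_sup' _ ha)
      refine Finset.sum_le_sum fun y _ => ?_
      split_ifs
      · rfl
      · exact mul_le_mul_of_nonneg_left (vDP_succ_le hp hA z N y) ((hp x a ha).1 y)

lemma surv_le_vDP
    (hp : ∀ (x : S), ∀ a ∈ Adm x, (∀ y, 0 ≤ p x a y) ∧ (∑ y, p x a y) = 1)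
    (hA : ∀ x, (Adm x).Nonempty) (z : S) :
    ∀ (N : ℕ) (π : Policy S A Adm) (x : S),
      survProb Adm p π x z N ≤ vDP Adm p hA z N x
  | 0, π, x => by rw [surv_zero]; exact le_of_eq rfl
  | N + 1, π, x => by
      rw [surv_succ]
      have step1 : ∀ q : A × S, π.toFun [] x q.1 * p x q.1 q.2 *
          (if q.2 ≠ z then survProb Adm p (shiftPolicy Adm π [(x, q.1)]) q.2 z N else 0) ≤
          π.toFun [] x q.1 * p x q.1 q.2 *
          (if q.2 = z then 0 else vDP Adm p hA z N q.2) := by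
        intro q
        refine mul_le_mul_of_nonneg_left ?_ (onestep_nonneg hp π x q)
        by_cases hq : q.2 = z
        · simp [hq]
        · simpa [hq] using surv_le_vDP hp hA z N (shiftPolicy Adm π [(x, q.1)]) q.2
      refine le_trans (Finset.sum_le_sum fun q _ => step1 q) ?_
      rw [Fintype.sum_prod_type]
      have step2 : ∀ a : A, ∑ y : S, π.toFun [] x a * p x a y *
          (if y = z then 0 else vDP Adm p hA z N y) ≤
          π.toFun [] x a * vDP Adm p hA z (N + 1) x := by
        intro a
        by_cases ha : a ∈ Adm x
        · calc ∑ y : S, π.toFun [] x a * p x a y * (if y = z then 0 else vDP Adm p hA z N y)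
              = π.toFun [] x a * ∑ y : S, (if y = z then 0 else p x a y * vDP Adm p hA z N y) := by
                rw [Finset.mul_sum]
                refine Finset.sum_congr rfl fun y _ => ?_
                split_ifs <;> ring
            _ ≤ π.toFun [] x a * vDP Adm p hA z (N + 1) x := by
                refine mul_le_mul_of_nonneg_left ?_ (π.nonneg [] x a)
                exact Finset.le_sup'
                  (fun a => ∑ y : S, (if y = z then 0 else p x a y * vDP Adm p hA z N y)) ha
        · simp [π.supp [] x a ha]
      refine le_trans (Finset.sum_le_sum fun a _ => step2 a) ?_
      rw [← Finset.sum_mul, π.sum_one, one_mul]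

lemma cylProb_policy_congr {π π' : Policy S A Adm} (hπ : π.toFun = π'.toFun)
    (x : S) (n : ℕ) (E : (Fin n → A × S) → Prop) :
    cylProb Adm p π x n E = cylProb Adm p π' x n E :=
  Finset.sum_congr rfl fun v _ => by
    rw [pathProb, pathProb, pathProb_congr hπ]

lemma surv_succ_stationary (f : S → A) (hf : ∀ s, f s ∈ Adm s) (x z : S) (n : ℕ) :
    survProb Adm p (stationary Adm f hf) x z (n + 1) =
      ∑ y, (if y = z then 0 else p x (f x) y *
        survProb Adm p (stationary Adm f hf) y z n) := by
  rw [surv_succ, Fintype.sum_prod_type]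
  have hshift : ∀ (pre : List (S × A)) (y : S),
      survProb Adm p (shiftPolicy Adm (stationary Adm f hf) pre) y z n =
        survProb Adm p (stationary Adm f hf) y z n := fun pre y =>
    cylProb_policy_congr (rfl) y n _
  have hrow : ∀ a y, (stationary Adm f hf).toFun [] x a * p x a y *
      (if y ≠ z then survProb Adm p (shiftPolicy Adm (stationary Adm f hf) [(x, a)]) y z n else 0) =
      (if a = f x then p x a y * (if y = z then 0 else survProb Adm p (stationary Adm f hf) y z n) else 0) := by
    intro a y
    rw [hshift]
    show (if a = f x then (1 : ℝ) else 0) * p x a y * _ = _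
    by_cases haf : a = f x <;> by_cases hy : y = z <;> simp [haf, hy]
  simp_rw [hrow]
  rw [Finset.sum_comm]
  refine Finset.sum_congr rfl fun y _ => ?_
  rw [Finset.sum_ite_eq' Finset.univ (f x) (fun a => p x a y * _)]
  simp only [Finset.mem_univ, if_true]
  by_cases hy : y = z <;> simp [hy]

lemma surv_nonneg
    (hp : ∀ (x : S), ∀ a ∈ Adm x, (∀ y, 0 ≤ p x a y) ∧ (∑ y, p x a y) = 1)
    (π : Policy S A Adm) (x z : S) (n : ℕ) : 0 ≤ survProb Adm p π x z n :=
  cylProb_nonneg hp π x n _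

lemma ExpT_eq (π : Policy S A Adm) (x z : S) :
    ExpT Adm p π x z = ∑' n : ℕ, ENNReal.ofReal (survProb Adm p π x z n) := rfl

lemma markov_surv
    (hp : ∀ (x : S), ∀ a ∈ Adm x, (∀ y, 0 ≤ p x a y) ∧ (∑ y, p x a y) = 1)
    {z : S} {M : ℝ} (hM : 0 < M) (π : Policy S A Adm) (x : S)
    (hE : ExpT Adm p π x z ≤ ENNReal.ofReal M) (N : ℕ) :
    survProb Adm p π x z N ≤ M / (N + 1) := by
  have hmono : ∀ m n : ℕ, m ≤ n → survProb Adm p π x z n ≤ survProb Adm p π x z m := by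
    intro m n hmn
    induction hmn with
    | refl => exact le_rfl
    | step _ ih => exact le_trans (surv_antitone hp z _ π x) ih
  have hsum : ∑ n ∈ Finset.range (N + 1), survProb Adm p π x z n ≤ M := by
    have h1 : ENNReal.ofReal (∑ n ∈ Finset.range (N + 1), survProb Adm p π x z n) ≤
        ENNReal.ofReal M := by
      rw [ENNReal.ofReal_sum_of_nonneg fun n _ => surv_nonneg hp π x z n]
      exact le_trans (ENNReal.sum_le_tsum _) hE
    rwa [ENNReal.ofReal_le_ofReal_iff hM.le] at h1
  have hlow : (N + 1 : ℝ) * survProb Adm p π x z N ≤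
      ∑ n ∈ Finset.range (N + 1), survProb Adm p π x z n := by
    calc (N + 1 : ℝ) * survProb Adm p π x z N
        = ∑ _n ∈ Finset.range (N + 1), survProb Adm p π x z N := by
          rw [Finset.sum_const, Finset.card_range, nsmul_eq_mul]
          push_cast
          ring
      _ ≤ ∑ n ∈ Finset.range (N + 1), survProb Adm p π x z n :=
          Finset.sum_le_sum fun n hn => hmono n N (by
            simpa using Nat.lt_succ_iff.mp (Finset.mem_range.mp hn))
  rw [le_div_iff₀ (by positivity)]
  nlinarith [surv_nonneg hp π x z N]

lemma tendsto_finset_sup'_aux {ι : Type*} :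
    ∀ {s : Finset ι} (hs : s.Nonempty) (F : ℕ → ι → ℝ) (g : ι → ℝ),
      (∀ a ∈ s, Filter.Tendsto (fun n => F n a) Filter.atTop (nhds (g a))) →
      Filter.Tendsto (fun n => s.sup' hs (F n)) Filter.atTop (nhds (s.sup' hs g)) := by
  intro s hs
  induction hs using Finset.Nonempty.cons_induction with
  | singleton a => intro F g h; simpa using h a (by simp)
  | cons a s ha hs ih =>
      intro F g h
      have key : Filter.Tendsto
          (fun n => F n a ⊔ s.sup' hs (F n)) Filter.atTop
          (nhds (g a ⊔ s.sup' hs g)) :=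
        (h a (by simp)).max (ih F g fun b hb => h b (by simp [hb]))
      refine Filter.Tendsto.congr (f₁ := fun n => F n a ⊔ s.sup' hs (F n))
        (fun n => (Finset.sup'_cons hs (F n)).symm) ?_
      rw [Finset.sup'_cons hs g]
      exact key

lemma exists_good_N
    (hp : ∀ (x : S), ∀ a ∈ Adm x, (∀ y, 0 ≤ p x a y) ∧ (∑ y, p x a y) = 1)
    (hA : ∀ x, (Adm x).Nonempty) (z : S) {M : ℝ} (hM : 0 < M)
    (hDoe2 : ∀ (x : S) (f : S → A) (hf : ∀ s, f s ∈ Adm s),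
      ExpT Adm p (stationary Adm f hf) x z ≤ ENNReal.ofReal M) :
    ∃ N : ℕ, ∀ (π : Policy S A Adm) (x : S), survProb Adm p π x z N ≤ 1 / 2 := by
  set v : S → ℝ := fun x => ⨅ N, vDP Adm p hA z N x with hv
  have hanti : ∀ x, Antitone fun N => vDP Adm p hA z N x := fun x =>
    antitone_nat_of_succ_le fun N => vDP_succ_le hp hA z N x
  have hbdd : ∀ x, BddBelow (Set.range fun N => vDP Adm p hA z N x) := fun x =>
    ⟨0, by rintro r ⟨N, rfl⟩; exact vDP_nonneg hp hA z N x⟩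
  have htend : ∀ x, Filter.Tendsto (fun N => vDP Adm p hA z N x)
      Filter.atTop (nhds (v x)) :=
    fun x => tendsto_atTop_ciInf (hanti x) (hbdd x)
  have hv_nonneg : ∀ x, 0 ≤ v x := fun x => le_ciInf fun N => vDP_nonneg hp hA z N x
  have hv_le : ∀ x N, v x ≤ vDP Adm p hA z N x := fun x N => ciInf_le (hbdd x) N
  have hfix : ∀ x, v x = (Adm x).sup' (hA x)
      fun a => ∑ y, (if y = z then 0 else p x a y * v y) := by
    intro x
    have h1 : Filter.Tendsto (fun N => vDP Adm p hA z (N + 1) x)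
        Filter.atTop (nhds (v x)) :=
      (htend x).comp (Filter.tendsto_add_atTop_nat 1)
    have h2 : Filter.Tendsto (fun N => (Adm x).sup' (hA x)
        fun a => ∑ y, (if y = z then 0 else p x a y * vDP Adm p hA z N y))
        Filter.atTop (nhds ((Adm x).sup' (hA x)
          fun a => ∑ y, (if y = z then 0 else p x a y * v y))) := by
      refine tendsto_finset_sup'_aux (hA x) _ _ fun a _ => ?_
      refine tendsto_finset_sum _ fun y _ => ?_
      by_cases hy : y = z
      · simpa [hy] using (tendsto_const_nhds : Filter.Tendsto (fun _ : ℕ => (0 : ℝ))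
          Filter.atTop (nhds 0))
      · simpa [hy] using ((htend y).const_mul (p x a y))
    exact tendsto_nhds_unique h1 h2
  have hsel : ∀ x, ∃ a, a ∈ Adm x ∧ v x = ∑ y, (if y = z then 0 else p x a y * v y) := by
    intro x
    obtain ⟨a, ha, hav⟩ := Finset.exists_mem_eq_sup' (hA x)
      (fun a => ∑ y, (if y = z then 0 else p x a y * v y))
    exact ⟨a, ha, (hfix x).trans hav⟩
  choose f hf hfv using hsel
  have hvs : ∀ (N : ℕ) (x : S), v x ≤ survProb Adm p (stationary Adm f hf) x z N := by
    intro N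
    induction N with
    | zero => intro x; rw [surv_zero]; exact hv_le x 0
    | succ N ih =>
        intro x
        rw [surv_succ_stationary, hfv x]
        refine Finset.sum_le_sum fun y _ => ?_
        split_ifs with hy
        · rfl
        · exact mul_le_mul_of_nonneg_left (ih y) ((hp x (f x) (hf x)).1 y)
  have hv0 : ∀ x, v x = 0 := by
    intro x
    refine le_antisymm ?_ (hv_nonneg x)
    by_contra hpos
    push_neg at hpos
    obtain ⟨N, hN⟩ := exists_nat_gt (M / v x)
    have h1 : v x ≤ M / (N + 1) :=
      (hvs N x).trans (markov_surv hp hM _ x (hDoe2 x f hf) N)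
    have h2 : M / (N + 1 : ℝ) < v x := by
      rw [div_lt_iff₀ (by positivity)]
      have h3 : M < N * v x := by
        have := (div_lt_iff₀ hpos).mp hN
        linarith
      nlinarith
    linarith
  have hev : ∀ x : S, ∀ᶠ N in Filter.atTop, vDP Adm p hA z N x ≤ 1 / 2 := by
    intro x
    have h := htend x
    rw [hv0 x] at h
    exact h.eventually_le_const (by norm_num)
  obtain ⟨N, hN⟩ := (Filter.eventually_all.2 hev).exists
  exact ⟨N, fun π x => (surv_le_vDP hp hA z N π x).trans (hN x)⟩

lemma costSum_ge {w : S → A → ℝ} {K : ℝ} (hKb : ∀ s a, -K ≤ w s a) :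
    ∀ (l : List (A × S)) (x : S), -(K * l.length) ≤ costSum w x l
  | [], x => by simp [costSum]
  | (a, y) :: rest, x => by
      have h1 := costSum_ge hKb rest y
      have h2 := hKb x a
      show -(K * (((a, y) :: rest).length : ℕ)) ≤ w x a + costSum w y rest
      simp only [List.length_cons]
      push_cast
      linarith

end Aux

/-- there is a uniform positive lower bound `B₀` for
`E_x^π[exp(λα Σ_{t<T}(C(X_t,A_t) − J*(λ,X_t)))]`. -/
theorem uniform_lower_bound
    (hA : ∀ x, (Adm x).Nonempty)
    (hp : ∀ (x : S), ∀ a ∈ Adm x, (∀ y, 0 ≤ p x a y) ∧ (∑ y, p x a y) = 1)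
    (hlam : 0 < lam) (α : ℝ) (hα : α ∈ Set.Ioo (0 : ℝ) 1)
    (z : S) (M : ℝ) (hDoe : Doeblin Adm p z M) :
    ∃ B₀ > (0 : ℝ), ∀ (x : S) (π : Policy S A Adm),
      ENNReal.ofReal B₀ ≤ EhitExp Adm p π x z
        (fun s a => lam * α * (C s a - Jopt Adm p C lam s)) := by
  rcases isEmpty_or_nonempty S with hS | hS
  · exact ⟨1, one_pos, fun x => (hS.false x).elim⟩
  haveI : Nonempty A := ⟨(hA (Classical.arbitrary S)).choose⟩
  set w : S → A → ℝ := fun s a => lam * α * (C s a - Jopt Adm p C lam s) with hw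
  obtain ⟨N, hN⟩ := exists_good_N hp hA z hDoe.1 hDoe.2
  set K : ℝ := Finset.univ.sup' Finset.univ_nonempty (fun q : S × A => |w q.1 q.2|)
    with hKdef
  have hK0 : 0 ≤ K :=
    le_trans (abs_nonneg _)
      (Finset.le_sup' (fun q : S × A => |w q.1 q.2|)
        (Finset.mem_univ (Classical.arbitrary (S × A))))
  have hKb : ∀ s a, -K ≤ w s a := by
    intro s a
    have h1 : |w s a| ≤ K :=
      Finset.le_sup' (fun q : S × A => |w q.1 q.2|) (Finset.mem_univ (s, a))
    have h2 := neg_abs_le (w s a)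
    linarith
  refine ⟨Real.exp (-(K * N)) / 2, by positivity, fun x π => ?_⟩
  have hsurv := hN π x
  calc ENNReal.ofReal (Real.exp (-(K * N)) / 2)
      ≤ ENNReal.ofReal (Real.exp (-(K * N)) * (1 - survProb Adm p π x z N)) := by
        apply ENNReal.ofReal_le_ofReal
        nlinarith [Real.exp_pos (-(K * N))]
    _ = ENNReal.ofReal (∑ m ∈ Finset.range (N + 1),
          Real.exp (-(K * N)) * FEsum Adm p π x z m) := by
        rw [one_sub_surv hp z π x N, Finset.mul_sum]
    _ = ∑ m ∈ Finset.range (N + 1),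
          ENNReal.ofReal (Real.exp (-(K * N)) * FEsum Adm p π x z m) :=
        ENNReal.ofReal_sum_of_nonneg fun m _ =>
          mul_nonneg (Real.exp_pos _).le (cylProb_nonneg hp π x m _)
    _ ≤ ∑ m ∈ Finset.range (N + 1), ∑ v : Fin m → A × S,
          (if FirstExit (fun y => y ≠ z) v then
            ENNReal.ofReal (pathProb Adm p π x (List.ofFn v) *
              Real.exp (costSum w x (List.ofFn v))) else 0) := by
        refine Finset.sum_le_sum fun m hm => ?_
        have hmN : (m : ℝ) ≤ N := by
          exact_mod_cast Nat.lt_succ_iff.mp (Finset.mem_range.mp hm)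
        rw [FEsum, cylProb, Finset.mul_sum]
        simp_rw [mul_ite, mul_zero]
        rw [ENNReal.ofReal_sum_of_nonneg (fun v _ => by
          split_ifs
          · exact mul_nonneg (Real.exp_pos _).le (pathProb_nonneg hp π x _)
          · exact le_rfl)]
        refine Finset.sum_le_sum fun v _ => ?_
        split_ifs with hFE
        · apply ENNReal.ofReal_le_ofReal
          rw [mul_comm]
          refine mul_le_mul_of_nonneg_left ?_ (pathProb_nonneg hp π x _)
          apply Real.exp_le_exp.2
          have hc := costSum_ge hKb (List.ofFn v) x
          rw [List.length_ofFn] at hc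
          have : -(K * (N : ℝ)) ≤ -(K * (m : ℝ)) := by nlinarith
          linarith
        · simp
    _ ≤ EhitExp Adm p π x z w := by
        rw [EhitExp, EexitExp]
        exact ENNReal.sum_le_tsum _

end RiskSensitive
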